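/- Let (S, o) be a right loop with unique inverses (x' o x = e = x o x' for each x). Then the set TAut(S, o) of twisted automorphisms of S forms a group under composition of maps. -/

import Mathlib

/-- A right loop: identity `e` and bijective right translations. -/
structure RightLoop (S : Type*) where
  op : S → S → S
  e : S
  op_e : ∀ x, op x e = x
  e_op : ∀ x, op e x = x
  bij : ∀ a, Function.Bijective (fun x => op x a)

/-- `h` is a twisted automorphism of the right loop `(S, o)` with inverse map `inv`. -/
def IsTAut {S : Type*} (L : RightLoop S) (inv : S → S) (h : Equiv.Perm S) : Prop :=
  ∀ x y : S, y ≠ L.e → h (L.op x y) = L.op (inv (h (inv x))) (h y)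

theorem Equiv.Perm.apply_inv_self {α : Type*} (f : Equiv.Perm α) (x : α) : f (f⁻¹ x) = x :=
  f.apply_symm_apply x

/-- The twisted automorphisms of a right loop with unique inverses form a group
under composition, i.e. they are (the carrier of) a subgroup of `Equiv.Perm S`. -/
theorem taut_is_group {S : Type*} (L : RightLoop S) (inv : S → S)
    (hinv : ∀ x, L.op (inv x) x = L.e ∧ L.op x (inv x) = L.e) :
    ∃ G : Subgroup (Equiv.Perm S), ∀ h : Equiv.Perm S, h ∈ G ↔ IsTAut L inv h := by
  have inv_inv : ∀ x, inv (inv x) = x := fun x => by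
    have h1 := (hinv (inv x)).1
    have h2 := (hinv x).2
    exact (L.bij (inv x)).1 (h1.trans h2.symm)
  have ge : ∀ (g : Equiv.Perm S), IsTAut L inv g → ∀ y, y ≠ L.e → g L.e = L.e := by
    intro g hg y hy
    have h := hg (inv y) y hy
    rw [(hinv y).1, inv_inv] at h
    rw [h, (hinv (g y)).1]
  have one_mem : IsTAut L inv 1 := by
    intro x y hy
    simp [inv_inv]
  have mul_mem : ∀ a b : Equiv.Perm S, IsTAut L inv a → IsTAut L inv b →
      IsTAut L inv (a * b) := by
    intro a b ha hb x y hy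
    have hbe : b L.e = L.e := ge b hb y hy
    have hby : b y ≠ L.e := fun h => hy (b.injective (h.trans hbe.symm))
    simp only [Equiv.Perm.mul_apply]
    rw [hb x y hy, ha _ (b y) hby, inv_inv]
  have inv_mem : ∀ a : Equiv.Perm S, IsTAut L inv a → IsTAut L inv a⁻¹ := by
    intro a ha x y hy
    have hae : a L.e = L.e := ge a ha y hy
    have hy' : a⁻¹ y ≠ L.e := fun h => hy (by rw [← Equiv.Perm.apply_inv_self a y, h, hae])
    apply a.injective
    rw [Equiv.Perm.apply_inv_self, ha _ (a⁻¹ y) hy', inv_inv,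
      Equiv.Perm.apply_inv_self, Equiv.Perm.apply_inv_self, inv_inv]
  exact ⟨{ carrier := {h | IsTAut L inv h}
           one_mem' := one_mem
           mul_mem' := fun {a b} ha hb => mul_mem a b ha hb
           inv_mem' := fun {a} ha => inv_mem a ha }, fun h => Iff.rfl⟩
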